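/- Let μ₁ ∈ I with μ₁ > μ, set Δ = μ₁ − μ, let ε ∈ (0, Δ) with μ₁ − ε ∈ I, let t₀ ≥ 1 be an integer, and let f(t₀) = 3 log t₀. Define κ = Σ_{s=1}^{t₀} 1{kl(μ̂_s, μ₁ − ε) ≤ f(t₀)/s}. Then E[κ] ≤ inf_{ε' ∈ (0, Δ − ε), μ + ε' ∈ I} ( f(t₀)/kl(μ + ε', μ₁ − ε) + 2V/ε'² ). -/

import Mathlib

open MeasureTheory Real Set ENNReal

set_option maxHeartbeats 2000000 in
/-- Let `μ₁ ∈ I` with `μ₁ > μ`, `Δ = μ₁ - μ`, `ε ∈ (0, Δ)` with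
`μ₁ - ε ∈ I`, `t₀ ≥ 1`, `f t₀ = 3 log t₀`, and `κ = Σ_{s=1}^{t₀} 1{kl (μ̂ₛ, μ₁ - ε) ≤ f t₀ / s}`.
Then `E[κ] ≤ inf_{ε' ∈ (0, Δ - ε), μ + ε' ∈ I} (f t₀ / kl (μ + ε', μ₁ - ε) + 2V / ε'²)`. -/
theorem expected_kappa_le
    (ρ : Measure ℝ) [SigmaFinite ρ]
    (Θ : Set ℝ) (hΘ : Θ = {θ : ℝ | Integrable (fun x => exp (θ * x)) ρ})
    (b b' b'' : ℝ → ℝ)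
    (hb : ∀ θ ∈ Θ, b θ = log (∫ x, exp (θ * x) ∂ρ))
    (hb' : ∀ θ ∈ interior Θ, HasDerivAt b (b' θ) θ)
    (hb'' : ∀ θ ∈ interior Θ, HasDerivAt b' (b'' θ) θ)
    (hbpos : ∀ θ ∈ interior Θ, 0 < b'' θ)
    (Iset : Set ℝ) (hI : Iset = b' '' (interior Θ))
    (kl : ℝ → ℝ → ℝ)
    (hkl : ∀ θ ∈ interior Θ, ∀ θ' ∈ interior Θ,
      kl (b' θ) (b' θ') = b θ' - b θ - b' θ * (θ' - θ))
    (hklcont : ∀ μ' ∈ Iset, ContinuousOn (fun x => kl x μ') (closure Iset))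
    (V : ℝ) (hV : 0 < V) (hbV : ∀ θ ∈ interior Θ, b'' θ ≤ V)
    (θ : ℝ) (hθ : θ ∈ interior Θ)
    (ν : Measure ℝ) (hν : ν = ρ.withDensity (fun x => ENNReal.ofReal (exp (θ * x - b θ))))
    (hsupp : ν (closure Iset)ᶜ = 0)
    (μ : ℝ) (hμ : μ = b' θ)
    (Ω : Type*) [MeasurableSpace Ω] (P : Measure Ω) [IsProbabilityMeasure P]
    (X : ℕ → Ω → ℝ) (hXmeas : ∀ i, Measurable (X i))
    (hXlaw : ∀ i, Measure.map (X i) P = ν)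
    (hXindep : ProbabilityTheory.iIndepFun X P)
    (μhat : ℕ → Ω → ℝ) (hμhat : ∀ s ω, μhat s ω = (∑ i ∈ Finset.range s, X i ω) / s)
    (μ₁ : ℝ) (hμ₁ : μ₁ ∈ Iset) (hμμ₁ : μ < μ₁)
    (Δ : ℝ) (hΔ : Δ = μ₁ - μ)
    (ε : ℝ) (hε : 0 < ε) (hεΔ : ε < Δ) (hμ₁ε : μ₁ - ε ∈ Iset)
    (t₀ : ℕ) (ht₀ : 1 ≤ t₀)
    (κ : Ω → ℝ)
    (hκ : ∀ ω, κ ω = ∑ s ∈ Finset.Icc 1 t₀,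
      (if kl (μhat s ω) (μ₁ - ε) ≤ 3 * Real.log t₀ / s then (1 : ℝ) else 0)) :
    ∫ ω, κ ω ∂P ≤ sInf {v : ℝ | ∃ ε' : ℝ, 0 < ε' ∧ ε' < Δ - ε ∧ μ + ε' ∈ Iset ∧
      v = 3 * Real.log t₀ / kl (μ + ε') (μ₁ - ε) + 2 * V / ε' ^ 2} := by
  classical
  set y : ℝ := μ₁ - ε with hy
  set f : ℝ := 3 * Real.log t₀ with hfdef
  have hf0 : 0 ≤ f := by
    have : (1:ℝ) ≤ (t₀:ℝ) := by exact_mod_cast ht₀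
    have := Real.log_nonneg this
    positivity
  set C : Set ℝ := closure Iset with hCdef
  have hθΘ : interior Θ ⊆ Θ := interior_subset
  -- Θ is convex
  have hΘconv : Convex ℝ Θ := by
    rw [hΘ]
    intro θ₁ h₁ θ₂ h₂ p q hp hq hpq
    simp only [Set.mem_setOf_eq, smul_eq_mul] at *
    have hmeas : AEStronglyMeasurable (fun x => Real.exp ((p * θ₁ + q * θ₂) * x)) ρ :=
      (Real.continuous_exp.comp (continuous_const.mul continuous_id)).aestronglyMeasurable
    refine Integrable.mono ((h₁.const_mul p).add (h₂.const_mul q)) hmeas ?_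
    filter_upwards with x
    have h1 : Real.exp ((p * θ₁ + q * θ₂) * x)
        = Real.exp (θ₁ * x) ^ p * Real.exp (θ₂ * x) ^ q := by
      rw [← Real.exp_mul, ← Real.exp_mul, ← Real.exp_add]
      ring_nf
    have h2 := Real.geom_mean_le_arith_mean2_weighted hp hq
      (Real.exp_pos (θ₁ * x)).le (Real.exp_pos (θ₂ * x)).le hpq
    rw [Real.norm_eq_abs, Real.norm_eq_abs, abs_of_nonneg (Real.exp_pos _).le]
    refine le_trans (by rw [h1]; exact h2) (le_abs_self _)
  have hIC : Convex ℝ (interior Θ) := hΘconv.interior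
  have hbd' : ∀ x ∈ interior Θ, DifferentiableAt ℝ b' x := fun x hx => (hb'' x hx).differentiableAt
  have hbd : ∀ x ∈ interior Θ, DifferentiableAt ℝ b x := fun x hx => (hb' x hx).differentiableAt
  -- b' strictly monotone
  have hb'mono : StrictMonoOn b' (interior Θ) := by
    apply strictMonoOn_of_deriv_pos hIC
      (fun x hx => (hbd' x hx).continuousAt.continuousWithinAt)
    intro x hx
    rw [interior_interior] at hx
    rw [(hb'' x hx).deriv]
    exact hbpos x hx
  -- Iset is convex
  have hIconv : Convex ℝ Iset := by
    have hIpre : IsPreconnected Iset := by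
      rw [hI]
      exact (hIC.isPreconnected).image b'
        (fun x hx => (hbd' x hx).continuousAt.continuousWithinAt)
    exact convex_iff_ordConnected.mpr hIpre.ordConnected
  have hμI : μ ∈ Iset := by rw [hI, hμ]; exact Set.mem_image_of_mem b' hθ
  -- Lipschitz-type bound for b'
  have hb'lip : ∀ θ₁ ∈ interior Θ, ∀ θ₂ ∈ interior Θ, θ₁ ≤ θ₂ →
      b' θ₂ - b' θ₁ ≤ V * (θ₂ - θ₁) := by
    intro θ₁ h₁ θ₂ h₂ h12
    have hmono : MonotoneOn (fun x => V * x - b' x) (interior Θ) := by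
      apply monotoneOn_of_deriv_nonneg hIC
      · exact (continuousOn_const.mul continuousOn_id).sub
          (fun x hx => (hbd' x hx).continuousAt.continuousWithinAt)
      · intro x hx
        rw [interior_interior] at hx
        have hVd : HasDerivAt (fun u : ℝ => V * u) V x := by
          simpa using (hasDerivAt_id x).const_mul V
        exact (hVd.sub (hb'' x hx)).differentiableAt.differentiableWithinAt
      · intro x hx
        rw [interior_interior] at hx
        have hVd : HasDerivAt (fun u : ℝ => V * u) V x := by
          simpa using (hasDerivAt_id x).const_mul V
        rw [(hVd.fun_sub (hb'' x hx)).deriv]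
        have := hbV x hx
        linarith
    have := hmono h₁ h₂ h12
    simp only at this
    linarith
  -- quadratic upper bound for b
  have hgap : ∀ θ₁ ∈ interior Θ, ∀ θ₂ ∈ interior Θ, θ₁ ≤ θ₂ →
      b θ₂ - b θ₁ - b' θ₁ * (θ₂ - θ₁) ≤ V * (θ₂ - θ₁) ^ 2 / 2 := by
    intro θ₁ h₁ θ₂ h₂ h12
    have hDconv : Convex ℝ (interior Θ ∩ Ici θ₁) := hIC.inter (convex_Ici θ₁)
    have hDsub : interior Θ ∩ Ici θ₁ ⊆ interior Θ := Set.inter_subset_left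
    have hderiv : ∀ x ∈ interior Θ, HasDerivAt
        (fun x => b x - b' θ₁ * x - V / 2 * (x - θ₁) ^ 2)
        (b' x - b' θ₁ - V * (x - θ₁)) x := by
      intro x hx
      have h1 : HasDerivAt (fun x : ℝ => (x - θ₁) ^ 2) (2 * (x - θ₁)) x := by
        simpa using ((hasDerivAt_id x).sub_const θ₁).fun_pow 2
      have hcd : HasDerivAt (fun u : ℝ => b' θ₁ * u) (b' θ₁) x := by
        simpa using (hasDerivAt_id x).const_mul (b' θ₁)
      have h2 := ((hb' x hx).fun_sub hcd).fun_sub (h1.const_mul (V/2))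
      rw [show b' x - b' θ₁ - V * (x - θ₁) = b' x - b' θ₁ - V / 2 * (2 * (x - θ₁)) by ring]
      exact h2
    have hant : AntitoneOn (fun x => b x - b' θ₁ * x - V / 2 * (x - θ₁) ^ 2)
        (interior Θ ∩ Ici θ₁) := by
      apply antitoneOn_of_deriv_nonpos hDconv
      · exact fun x hx => (hderiv x (hDsub hx)).differentiableAt.continuousAt.continuousWithinAt
      · exact fun x hx => (hderiv x (hDsub (interior_subset hx))).differentiableAt.differentiableWithinAt
      · intro x hx
        have hxD := interior_subset hx
        rw [(hderiv x (hDsub hxD)).deriv]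
        have := hb'lip θ₁ h₁ x (hDsub hxD) hxD.2
        linarith
    have h := hant ⟨h₁, Set.self_mem_Ici⟩ ⟨h₂, h12⟩ h12
    simp only at h
    nlinarith [h]
  -- the law ν is a probability measure, ρ ≠ 0
  have hνprob : IsProbabilityMeasure ν := by
    rw [← hXlaw 0]
    exact MeasureTheory.Measure.isProbabilityMeasure_map (hXmeas 0).aemeasurable
  have hρint : ∀ c ∈ Θ, Integrable (fun x => Real.exp (c * x)) ρ := by
    intro c hc; rw [hΘ] at hc; exact hc
  have hρne : NeZero ρ := by
    constructor
    intro h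
    have h1 := hνprob.measure_univ
    rw [hν, h] at h1
    simp at h1
  have hexppos : ∀ c ∈ Θ, 0 < ∫ x, Real.exp (c * x) ∂ρ := fun c hc =>
    MeasureTheory.integral_exp_pos (hρint c hc)
  have hbexp : ∀ c ∈ Θ, Real.exp (b c) = ∫ x, Real.exp (c * x) ∂ρ := by
    intro c hc
    rw [hb c hc]
    exact Real.exp_log (hexppos c hc)
  -- density manipulation
  have hdensmeas : Measurable (fun x => (Real.exp (θ * x - b θ)).toNNReal) :=
    (((measurable_id.const_mul θ).sub measurable_const).exp).real_toNNReal
  have hνd : ν = ρ.withDensity (fun x => ((Real.exp (θ * x - b θ)).toNNReal : ℝ≥0∞)) := hν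
  -- integrability of exp(lam * X i) and mgf computation
  have hintν : ∀ lam : ℝ, θ + lam ∈ Θ → Integrable (fun x => Real.exp (lam * x)) ν := by
    intro lam hlam
    rw [hνd, MeasureTheory.integrable_withDensity_iff_integrable_smul hdensmeas]
    have heq : (fun x => (Real.exp (θ * x - b θ)).toNNReal • Real.exp (lam * x))
        = fun x => Real.exp (-(b θ)) * Real.exp ((θ + lam) * x) := by
      funext x
      rw [NNReal.smul_def, smul_eq_mul, Real.coe_toNNReal _ (Real.exp_pos _).le,
        ← Real.exp_add, ← Real.exp_add]
      ring_nf
    rw [heq]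
    exact (hρint _ hlam).const_mul _
  have hintexp : ∀ lam : ℝ, θ + lam ∈ Θ → ∀ i,
      Integrable (fun ω => Real.exp (lam * X i ω)) P := by
    intro lam hlam i
    have h1 := hintν lam hlam
    rw [← hXlaw i] at h1
    have hg : AEStronglyMeasurable (fun x : ℝ => Real.exp (lam * x)) (Measure.map (X i) P) :=
      (Continuous.aestronglyMeasurable (by fun_prop))
    have := (integrable_map_measure hg (hXmeas i).aemeasurable).mp h1
    exact this
  have hmgf : ∀ lam : ℝ, θ + lam ∈ Θ → ∀ i,
      ProbabilityTheory.mgf (X i) P lam = Real.exp (b (θ + lam) - b θ) := by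
    intro lam hlam i
    have h1 : ∫ x, Real.exp (lam * x) ∂ν = ProbabilityTheory.mgf (X i) P lam := by
      have hg : AEStronglyMeasurable (fun x : ℝ => Real.exp (lam * x)) (Measure.map (X i) P) :=
        (Continuous.aestronglyMeasurable (by fun_prop))
      rw [← hXlaw i, integral_map (hXmeas i).aemeasurable hg]
      rfl
    rw [← h1, hνd, integral_withDensity_eq_integral_smul hdensmeas]
    have heq : (fun x => (Real.exp (θ * x - b θ)).toNNReal • Real.exp (lam * x))
        = fun x => Real.exp (-(b θ)) * Real.exp ((θ + lam) * x) := by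
      funext x
      rw [NNReal.smul_def, smul_eq_mul, Real.coe_toNNReal _ (Real.exp_pos _).le,
        ← Real.exp_add, ← Real.exp_add]
      ring_nf
    rw [heq, MeasureTheory.integral_const_mul, ← hbexp _ hlam, ← Real.exp_add]
    ring_nf
  -- Chernoff bound
  have chern : ∀ lam : ℝ, 0 ≤ lam → θ + lam ∈ Θ → ∀ (s : ℕ) (z : ℝ),
      (P {ω | z ≤ ∑ i ∈ Finset.range s, X i ω}).toReal
        ≤ Real.exp (-lam * z + s * (b (θ + lam) - b θ)) := by
    intro lam hlam hlamΘ s z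
    have hint : ∀ i ∈ Finset.range s, Integrable (fun ω => Real.exp (lam * X i ω)) P :=
      fun i _ => hintexp lam hlamΘ i
    have h1 := ProbabilityTheory.measure_ge_le_exp_mul_mgf
      (X := ∑ i ∈ Finset.range s, X i) (μ := P) z hlam
      (hXindep.integrable_exp_mul_sum hXmeas hint)
    rw [hXindep.mgf_sum hXmeas] at h1
    have h2 : ∀ i ∈ Finset.range s, ProbabilityTheory.mgf (X i) P lam
        = Real.exp (b (θ + lam) - b θ) := fun i _ => hmgf lam hlamΘ i
    rw [Finset.prod_congr rfl h2, Finset.prod_const, Finset.card_range,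
      ← Real.exp_nat_mul, ← Real.exp_add] at h1
    have h3 : {ω | z ≤ (∑ i ∈ Finset.range s, X i) ω}
        = {ω | z ≤ ∑ i ∈ Finset.range s, X i ω} := by
      ext ω; simp [Finset.sum_apply]
    rwa [h3] at h1
  -- measurable events
  set As : ℕ → Set ℝ := fun s => C ∩ (fun x => kl x y) ⁻¹' Iic (f / s) with hAsdef
  have hAsclosed : ∀ s, IsClosed (As s) := fun s =>
    (hklcont y hμ₁ε).preimage_isClosed_of_isClosed isClosed_closure isClosed_Iic
  have hμhatmeas : ∀ s, Measurable (μhat s) := by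
    intro s
    have : μhat s = fun ω => (∑ i ∈ Finset.range s, X i ω) / s := funext fun ω => hμhat s ω
    rw [this]
    exact (Finset.measurable_sum _ (fun i _ => hXmeas i)).div_const _
  set E : ℕ → Set Ω := fun s => μhat s ⁻¹' As s with hEdef
  have hE : ∀ s, MeasurableSet (E s) := fun s => (hμhatmeas s) (hAsclosed s).measurableSet
  -- a.s. membership in C
  have hXi : ∀ i, ∀ᵐ ω ∂P, X i ω ∈ C := by
    intro i
    have hmC : MeasurableSet (Cᶜ) := isClosed_closure.measurableSet.compl
    have h0 : P (X i ⁻¹' Cᶜ) = 0 := by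
      rw [← Measure.map_apply (hXmeas i) hmC, hXlaw i]
      exact hsupp
    rw [ae_iff]
    convert h0 using 2
    rfl
  have hmuhatC : ∀ᵐ ω ∂P, ∀ s ∈ Finset.Icc 1 t₀, μhat s ω ∈ C := by
    have hall : ∀ᵐ ω ∂P, ∀ i : ℕ, X i ω ∈ C := ae_all_iff.mpr hXi
    filter_upwards [hall] with ω hω
    intro s hs
    rw [Finset.mem_Icc] at hs
    have hs0 : (0:ℝ) < s := by exact_mod_cast hs.1
    rw [hμhat]
    have heq : (∑ i ∈ Finset.range s, X i ω) / s
        = ∑ i ∈ Finset.range s, ((s:ℝ)⁻¹) • X i ω := by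
      rw [← Finset.smul_sum, smul_eq_mul, div_eq_inv_mul]
    rw [heq]
    refine (hIconv.closure).sum_mem (fun i _ => by positivity) ?_ ?_
    · rw [Finset.sum_const, Finset.card_range, nsmul_eq_mul, mul_inv_cancel₀ hs0.ne']
    · exact fun i _ => hω i
  -- the integral identity
  have hint : ∫ ω, κ ω ∂P = ∑ s ∈ Finset.Icc 1 t₀, (P (E s)).toReal := by
    have hκae : κ =ᵐ[P] fun ω => ∑ s ∈ Finset.Icc 1 t₀, Set.indicator (E s) (fun _ => (1:ℝ)) ω := by
      filter_upwards [hmuhatC] with ω hω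
      rw [hκ ω]
      refine Finset.sum_congr rfl (fun s hs => ?_)
      by_cases hcond : kl (μhat s ω) y ≤ f / s
      · rw [if_pos hcond, Set.indicator_of_mem]
        exact ⟨hω s hs, hcond⟩
      · rw [if_neg hcond, Set.indicator_of_notMem]
        intro hmem
        exact hcond hmem.2
    rw [integral_congr_ae hκae, integral_finset_sum _
      (fun s _ => (integrable_const (1:ℝ)).indicator (hE s))]
    refine Finset.sum_congr rfl (fun s _ => ?_)
    rw [← measureReal_def, ← MeasureTheory.integral_indicator_one (hE s)]
    rfl
  -- main per-ε' bound
  have key : ∀ ε' : ℝ, 0 < ε' → ε' < Δ - ε → μ + ε' ∈ Iset →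
      ∫ ω, κ ω ∂P ≤ f / kl (μ + ε') y + 2 * V / ε' ^ 2 := by
    intro ε' hε'0 hε'Δ hμε'
    obtain ⟨θ'', hθ''mem, hθ''⟩ : ∃ t ∈ interior Θ, b' t = μ + ε' := by
      rw [hI] at hμε'; obtain ⟨t, ht, h⟩ := hμε'; exact ⟨t, ht, h⟩
    obtain ⟨η', hη'mem, hη'⟩ : ∃ t ∈ interior Θ, b' t = y := by
      rw [hI] at hμ₁ε; obtain ⟨t, ht, h⟩ := hμ₁ε; exact ⟨t, ht, h⟩
    have hμε'lty : μ + ε' < y := by rw [hy]; rw [hΔ] at hε'Δ; linarith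
    have hθltθ'' : θ < θ'' := by
      refine (hb'mono.lt_iff_lt hθ hθ''mem).mp ?_
      rw [hθ'', ← hμ]
      linarith
    have hθ''ltη' : θ'' < η' := by
      refine (hb'mono.lt_iff_lt hθ''mem hη'mem).mp ?_
      rw [hθ'', hη']
      exact hμε'lty
    have hIccθ'' : Icc θ'' η' ⊆ interior Θ := hIC.ordConnected.out hθ''mem hη'mem
    -- positivity of kl (μ + ε') y
    have hcpos : 0 < kl (μ + ε') y := by
      rw [← hθ'', ← hη', hkl θ'' hθ''mem η' hη'mem]
      have hFd : ∀ x ∈ interior Θ, HasDerivAt (fun u => b u - b' θ'' * u) (b' x - b' θ'') x := by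
        intro x hx
        have hcd : HasDerivAt (fun u : ℝ => b' θ'' * u) (b' θ'') x := by
          simpa using (hasDerivAt_id x).const_mul (b' θ'')
        exact (hb' x hx).sub hcd
      have hFmono : StrictMonoOn (fun u => b u - b' θ'' * u) (Icc θ'' η') := by
        apply strictMonoOn_of_deriv_pos (convex_Icc _ _)
        · exact fun x hx => (hFd x (hIccθ'' hx)).differentiableAt.continuousAt.continuousWithinAt
        · intro x hx
          rw [interior_Icc] at hx
          have hxm : x ∈ interior Θ := hIccθ'' ⟨hx.1.le, hx.2.le⟩
          rw [(hFd x hxm).deriv]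
          have : b' θ'' < b' x := hb'mono hθ''mem hxm hx.1
          linarith
      have := hFmono (Set.left_mem_Icc.mpr hθ''ltη'.le) (Set.right_mem_Icc.mpr hθ''ltη'.le) hθ''ltη'
      simp only at this
      nlinarith [this]
    -- monotonicity of kl (·, y) below μ + ε' on Iset
    have klmono : ∀ x ∈ Iset, x ≤ μ + ε' → kl (μ + ε') y ≤ kl x y := by
      intro x hx hxle
      obtain ⟨η₀, hη₀mem, hη₀⟩ : ∃ t ∈ interior Θ, b' t = x := by
        rw [hI] at hx; obtain ⟨t, ht, h⟩ := hx; exact ⟨t, ht, h⟩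
      have hη₀θ'' : η₀ ≤ θ'' := by
        by_contra hlt
        push_neg at hlt
        have := hb'mono hθ''mem hη₀mem hlt
        rw [hη₀, hθ''] at this
        linarith
      have hIcc0 : Icc η₀ θ'' ⊆ interior Θ := hIC.ordConnected.out hη₀mem hθ''mem
      have hGd : ∀ s ∈ interior Θ, HasDerivAt (fun u => b η' - b u - b' u * (η' - u))
          (-(b'' s * (η' - s))) s := by
        intro s hs
        have hd : HasDerivAt (fun u : ℝ => η' - u) (-1) s := by
          simpa using (hasDerivAt_id s).const_sub η'
        have h1 : HasDerivAt (fun u : ℝ => b' u * (η' - u)) (b'' s * (η' - s) + b' s * (-1)) s :=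
          (hb'' s hs).mul hd
        have h2 := ((hb' s hs).const_sub (b η')).fun_sub h1
        rw [show -(b'' s * (η' - s)) = -b' s - (b'' s * (η' - s) + b' s * -1) by ring]
        exact h2
      have hGant : AntitoneOn (fun u => b η' - b u - b' u * (η' - u)) (Icc η₀ θ'') := by
        apply antitoneOn_of_deriv_nonpos (convex_Icc _ _)
        · exact fun s hs => (hGd s (hIcc0 hs)).differentiableAt.continuousAt.continuousWithinAt
        · intro s hs
          rw [interior_Icc] at hs
          exact (hGd s (hIcc0 ⟨hs.1.le, hs.2.le⟩)).differentiableAt.differentiableWithinAt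
        · intro s hs
          rw [interior_Icc] at hs
          have hsm : s ∈ interior Θ := hIcc0 ⟨hs.1.le, hs.2.le⟩
          rw [(hGd s hsm).deriv]
          have h1 : 0 < b'' s := hbpos s hsm
          have h2 : s ≤ η' := le_trans hs.2.le hθ''ltη'.le
          nlinarith
      have hmono := hGant (Set.left_mem_Icc.mpr hη₀θ'') (Set.right_mem_Icc.mpr hη₀θ'') hη₀θ''
      simp only at hmono
      rw [← hθ'', ← hη₀, ← hη', hkl θ'' hθ''mem η' hη'mem, hkl η₀ hη₀mem η' hη'mem]
      exact hmono
    -- extend monotonicity to the closure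
    have klmonoC : ∀ x ∈ C, x ≤ μ + ε' → kl (μ + ε') y ≤ kl x y := by
      intro x hxC hxle
      by_cases hxI : x ∈ Iset
      · exact klmono x hxI hxle
      have hxlt : x < μ + ε' := lt_of_le_of_ne hxle (fun h => hxI (h ▸ hμε'))
      obtain ⟨u, hu, hulim⟩ := mem_closure_iff_seq_limit.mp hxC
      have hev : ∀ᶠ n in Filter.atTop, u n < μ + ε' := hulim.eventually_lt_const hxlt
      have htends : Filter.Tendsto (fun n => kl (u n) y) Filter.atTop (nhds (kl x y)) := by
        have hcw : ContinuousWithinAt (fun x => kl x y) C x := (hklcont y hμ₁ε) x hxC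
        exact hcw.tendsto.comp (tendsto_nhdsWithin_iff.mpr
          ⟨hulim, Filter.Eventually.of_forall (fun n => subset_closure (hu n))⟩)
      refine ge_of_tendsto htends ?_
      filter_upwards [hev] with n hn
      exact klmono (u n) (hu n) hn.le
    -- Chernoff parameter
    set lam : ℝ := ε' / V with hlamdef
    have hlam0 : 0 < lam := div_pos hε'0 hV
    have hlamle : lam ≤ θ'' - θ := by
      have hlip := hb'lip θ hθ θ'' hθ''mem hθltθ''.le
      rw [hθ'', ← hμ] at hlip
      rw [hlamdef, div_le_iff₀ hV]
      nlinarith [hlip]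
    have hθlammem : θ + lam ∈ interior Θ :=
      (hIC.ordConnected.out hθ hθ''mem) ⟨le_add_of_nonneg_right hlam0.le, by linarith⟩
    have hexpbound : b (θ + lam) - b θ - lam * (μ + ε') ≤ -(ε' ^ 2 / (2 * V)) := by
      have hg := hgap θ hθ (θ + lam) hθlammem (le_add_of_nonneg_right hlam0.le)
      have hsimp : θ + lam - θ = lam := by ring
      rw [hsimp, ← hμ] at hg
      have h2 : V * lam ^ 2 / 2 - lam * ε' = -(ε' ^ 2 / (2 * V)) := by
        rw [hlamdef]; field_simp; ring
      have h3 : lam * (μ + ε') = μ * lam + lam * ε' := by ring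
      linarith [hg]
    set a : ℝ := ε' ^ 2 / (2 * V) with hadef
    have ha0 : 0 < a := by positivity
    -- per-term bound for large s
    have hEbound : ∀ s ∈ Finset.Icc 1 t₀, f / kl (μ + ε') y < (s:ℝ) →
        (P (E s)).toReal ≤ Real.exp (-a) ^ s := by
      intro s hs hslarge
      have hs1 : 1 ≤ s := (Finset.mem_Icc.mp hs).1
      have hspos : (0:ℝ) < s := by exact_mod_cast hs1
      have hsub : E s ⊆ {ω | (s:ℝ) * (μ + ε') ≤ ∑ i ∈ Finset.range s, X i ω} := by
        intro ω hω
        have hω' : μhat s ω ∈ As s := hω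
        obtain ⟨hωC, hωkl⟩ := hω'
        simp only [Set.mem_preimage, Set.mem_Iic] at hωkl
        simp only [Set.mem_setOf_eq]
        by_contra hlt
        push_neg at hlt
        have hμhatle : μhat s ω ≤ μ + ε' := by
          rw [hμhat, div_le_iff₀ hspos]
          nlinarith [hlt]
        have h1 := klmonoC (μhat s ω) hωC hμhatle
        have h2 : f / s < kl (μ + ε') y := by
          rw [div_lt_iff₀ hspos]
          rw [div_lt_iff₀ hcpos] at hslarge
          nlinarith [hslarge]
        linarith
      have hP : (P (E s)).toReal
          ≤ (P {ω | (s:ℝ) * (μ + ε') ≤ ∑ i ∈ Finset.range s, X i ω}).toReal :=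
        ENNReal.toReal_mono (measure_ne_top _ _) (measure_mono hsub)
      refine le_trans hP (le_trans (chern lam hlam0.le (hθΘ hθlammem) s _) ?_)
      rw [← Real.exp_nat_mul]
      apply Real.exp_le_exp.mpr
      have h3 : (s:ℝ) * (b (θ + lam) - b θ - lam * (μ + ε')) ≤ (s:ℝ) * (-a) :=
        mul_le_mul_of_nonneg_left hexpbound hspos.le
      nlinarith [h3]
    -- split the sum
    rw [hint]
    rw [← Finset.sum_filter_add_sum_filter_not (Finset.Icc 1 t₀)
      (fun s : ℕ => (s:ℝ) ≤ f / kl (μ + ε') y) (fun s => (P (E s)).toReal)]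
    have hNnn : 0 ≤ f / kl (μ + ε') y := div_nonneg hf0 hcpos.le
    have hb1 : ∑ s ∈ (Finset.Icc 1 t₀).filter (fun s : ℕ => (s:ℝ) ≤ f / kl (μ + ε') y),
        (P (E s)).toReal ≤ f / kl (μ + ε') y := by
      have hle1 : ∀ s ∈ (Finset.Icc 1 t₀).filter (fun s : ℕ => (s:ℝ) ≤ f / kl (μ + ε') y),
          (P (E s)).toReal ≤ 1 := by
        intro s _
        have h1 : P (E s) ≤ 1 := prob_le_one
        have := ENNReal.toReal_mono ENNReal.one_ne_top h1
        simpa using this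
      calc ∑ s ∈ (Finset.Icc 1 t₀).filter (fun s : ℕ => (s:ℝ) ≤ f / kl (μ + ε') y),
            (P (E s)).toReal
          ≤ ∑ _s ∈ (Finset.Icc 1 t₀).filter (fun s : ℕ => (s:ℝ) ≤ f / kl (μ + ε') y), (1:ℝ) :=
            Finset.sum_le_sum hle1
        _ = ((Finset.Icc 1 t₀).filter (fun s : ℕ => (s:ℝ) ≤ f / kl (μ + ε') y)).card := by
            rw [Finset.sum_const, nsmul_eq_mul, mul_one]
        _ ≤ f / kl (μ + ε') y := by
            have hsubf : (Finset.Icc 1 t₀).filter (fun s : ℕ => (s:ℝ) ≤ f / kl (μ + ε') y)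
                ⊆ Finset.Icc 1 (Nat.floor (f / kl (μ + ε') y)) := by
              intro s hsm
              rw [Finset.mem_filter, Finset.mem_Icc] at hsm
              rw [Finset.mem_Icc]
              exact ⟨hsm.1.1, Nat.le_floor hsm.2⟩
            have hcard := Finset.card_le_card hsubf
            rw [Nat.card_Icc] at hcard
            have : (((Finset.Icc 1 t₀).filter (fun s : ℕ => (s:ℝ) ≤ f / kl (μ + ε') y)).card : ℝ)
                ≤ (Nat.floor (f / kl (μ + ε') y) : ℝ) := by
              have h2 : Nat.floor (f / kl (μ + ε') y) + 1 - 1 = Nat.floor (f / kl (μ + ε') y) := by omega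
              rw [h2] at hcard
              exact_mod_cast hcard
            exact le_trans this (Nat.floor_le hNnn)
    have hb2 : ∑ s ∈ (Finset.Icc 1 t₀).filter (fun s : ℕ => ¬ (s:ℝ) ≤ f / kl (μ + ε') y),
        (P (E s)).toReal ≤ 2 * V / ε' ^ 2 := by
      have hterm : ∀ s ∈ (Finset.Icc 1 t₀).filter (fun s : ℕ => ¬ (s:ℝ) ≤ f / kl (μ + ε') y),
          (P (E s)).toReal ≤ Real.exp (-a) ^ s := by
        intro s hsm
        rw [Finset.mem_filter] at hsm
        exact hEbound s hsm.1 (not_le.mp hsm.2)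
      have hr0 : 0 < Real.exp (-a) := Real.exp_pos _
      have hr1 : Real.exp (-a) < 1 := Real.exp_lt_one_iff.mpr (by linarith)
      calc ∑ s ∈ (Finset.Icc 1 t₀).filter (fun s : ℕ => ¬ (s:ℝ) ≤ f / kl (μ + ε') y),
            (P (E s)).toReal
          ≤ ∑ s ∈ (Finset.Icc 1 t₀).filter (fun s : ℕ => ¬ (s:ℝ) ≤ f / kl (μ + ε') y),
            Real.exp (-a) ^ s := Finset.sum_le_sum hterm
        _ ≤ ∑ s ∈ Finset.Icc 1 t₀, Real.exp (-a) ^ s :=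
            Finset.sum_le_sum_of_subset_of_nonneg (Finset.filter_subset _ _)
              (fun i _ _ => pow_nonneg hr0.le i)
        _ ≤ 2 * V / ε' ^ 2 := by
            have h1 : ∑ s ∈ Finset.Icc 1 t₀, Real.exp (-a) ^ s
                = ∑ k ∈ Finset.range t₀, Real.exp (-a) ^ (1 + k) := by
              rw [← Finset.Ico_add_one_right_eq_Icc, Finset.sum_Ico_eq_sum_range]
              simp
            have h2 : ∑ k ∈ Finset.range t₀, Real.exp (-a) ^ (1 + k)
                = Real.exp (-a) * ∑ k ∈ Finset.range t₀, Real.exp (-a) ^ k := by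
              rw [Finset.mul_sum]
              exact Finset.sum_congr rfl fun k _ => by rw [pow_add, pow_one]
            have h3 : ∑ k ∈ Finset.range t₀, Real.exp (-a) ^ k ≤ (1 - Real.exp (-a))⁻¹ :=
              sum_le_hasSum _ (fun i _ => pow_nonneg hr0.le i)
                (hasSum_geometric_of_lt_one hr0.le hr1)
            have h1r : 0 < 1 - Real.exp (-a) := by linarith
            have hmain : Real.exp (-a) * (1 - Real.exp (-a))⁻¹ ≤ 2 * V / ε' ^ 2 := by
              have ha' : 2 * V / ε' ^ 2 = 1 / a := by
                rw [hadef, one_div, inv_div]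
              rw [ha', ← div_eq_mul_inv, div_le_div_iff₀ h1r ha0]
              have hh := Real.add_one_le_exp a
              have hre : Real.exp (-a) * Real.exp a = 1 := by
                rw [← Real.exp_add]; simp
              nlinarith [hh, hre, hr0.le]
            calc ∑ s ∈ Finset.Icc 1 t₀, Real.exp (-a) ^ s
                = Real.exp (-a) * ∑ k ∈ Finset.range t₀, Real.exp (-a) ^ k := by rw [h1, h2]
              _ ≤ Real.exp (-a) * (1 - Real.exp (-a))⁻¹ :=
                  mul_le_mul_of_nonneg_left h3 hr0.le
              _ ≤ 2 * V / ε' ^ 2 := hmain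
    exact add_le_add hb1 hb2
  -- conclude via le_csInf
  apply le_csInf
  · refine ⟨f / kl (μ + (Δ - ε)/2) y + 2 * V / ((Δ - ε)/2) ^ 2, (Δ - ε)/2, by linarith, by linarith,
      ?_, rfl⟩
    refine hIconv.ordConnected.out hμI hμ₁ε ⟨by linarith, by rw [hΔ] at *; linarith⟩
  · rintro v ⟨ε', h1, h2, h3, rfl⟩
    exact key ε' h1 h2 h3
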